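/- Given real numbers s1, s2, b1, b2 and a1 < a2, let s = (b2 - b1)/(a2 - a1), L(x) = b1 + s(x - a1), and M = max(|s1 - s|, |s2 - s|). Then there exists a cubic polynomial f with f(a1) = b1, f(a2) = b2, f'(a1) = s1, f'(a2) = s2, such that for all x in [a1, a2]: |f'(x) - s| ≤ 3M and |f(x) - L(x)| ≤ 2M(a2 - a1). -/

import Mathlib

open Polynomial
set_option maxHeartbeats 1000000

theorem stmt_0 (s1 s2 b1 b2 a1 a2 : ℝ) (hlt : a1 < a2) :
    ∃ f : Polynomial ℝ, f.degree ≤ 3 ∧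
      f.eval a1 = b1 ∧ f.eval a2 = b2 ∧
      f.derivative.eval a1 = s1 ∧ f.derivative.eval a2 = s2 ∧
      ∀ x ∈ Set.Icc a1 a2,
        |f.derivative.eval x - (b2 - b1) / (a2 - a1)| ≤
          3 * max |s1 - (b2 - b1) / (a2 - a1)| |s2 - (b2 - b1) / (a2 - a1)| ∧
        |f.eval x - (b1 + (b2 - b1) / (a2 - a1) * (x - a1))| ≤
          2 * max |s1 - (b2 - b1) / (a2 - a1)| |s2 - (b2 - b1) / (a2 - a1)| * (a2 - a1) := by
  set h := a2 - a1 with hh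
  have hh0 : (0:ℝ) < h := by simp [hh]; linarith
  have hne : h ≠ 0 := ne_of_gt hh0
  set s := (b2 - b1) / (a2 - a1) with hs
  set e1 := s1 - s with he1
  set e2 := s2 - s with he2
  set β1 := e1 / h^2 with hb1
  set β2 := e2 / h^2 with hb2
  set p : Polynomial ℝ := C b1 + C s * (X - C a1) + C β2 * (X - C a1)^2 * (X - C a2)
      + C β1 * (X - C a1) * (X - C a2)^2 with hp
  have heval : ∀ x : ℝ, p.eval x = b1 + s*(x-a1) + β2*(x-a1)^2*(x-a2) + β1*(x-a1)*(x-a2)^2 := by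
    intro x; simp [hp]
  have hderiv : ∀ x : ℝ, p.derivative.eval x
      = s + β2*(2*(x-a1)*(x-a2)+(x-a1)^2) + β1*((x-a2)^2+2*(x-a1)*(x-a2)) := by
    intro x
    simp [hp, derivative_mul, derivative_pow]
    ring
  have hsq : h^2 ≠ 0 := pow_ne_zero _ hne
  refine ⟨p, ?_, ?_, ?_, ?_, ?_, ?_⟩
  · rw [hp]; compute_degree!
  · rw [heval]; ring
  · rw [heval]
    have : s * (a2 - a1) = b2 - b1 := by
      rw [hs]; field_simp
      exact mul_div_cancel_right₀ _ (sub_ne_zero.mpr hlt.ne')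
    nlinarith [this]
  · rw [hderiv, hb1]
    field_simp
    ring
  · rw [hderiv, hb2]
    field_simp
    ring
  · intro x hx
    obtain ⟨hx1, hx2⟩ := hx
    set M := max |s1 - s| |s2 - s| with hM
    have hm1 : |e1| ≤ M := le_max_left _ _
    have hm2 : |e2| ≤ M := le_max_right _ _
    set u := x - a1 with hu
    set v := x - a2 with hv
    have hu0 : 0 ≤ u := by simp [hu]; linarith
    have hv0 : v ≤ 0 := by simp [hv]; linarith
    have huh : u ≤ h := by simp [hu, hh]; linarith
    have hvh : -h ≤ v := by simp [hv, hh]; linarith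
    have hA : |u^2 + 2*u*v| ≤ h^2 := by
      rw [abs_le]; constructor <;> nlinarith
    have hB : |v^2 + 2*u*v| ≤ h^2 := by
      rw [abs_le]; constructor <;> nlinarith
    have hu2 : u^2 ≤ h^2 := by nlinarith
    have hv2 : v^2 ≤ h^2 := by nlinarith
    have hC : |u^2*v| ≤ h^2*h := by
      rw [abs_le]
      constructor
      · nlinarith [mul_nonneg (sq_nonneg u) (show (0:ℝ) ≤ v + h by linarith),
          mul_le_mul_of_nonneg_right hu2 hh0.le]
      · nlinarith [mul_nonneg (sq_nonneg u) (neg_nonneg.mpr hv0), sq_nonneg h,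
          mul_nonneg (mul_nonneg hh0.le hh0.le) hh0.le]
    have hD : |u*v^2| ≤ h^2*h := by
      rw [abs_le]
      constructor
      · nlinarith [mul_nonneg hu0 (sq_nonneg v),
          mul_nonneg (mul_nonneg hh0.le hh0.le) hh0.le]
      · nlinarith [mul_le_mul_of_nonneg_left hv2 hu0,
          mul_le_mul_of_nonneg_right huh (mul_nonneg hh0.le hh0.le)]
    have hb2abs : |β2| = |e2| / h^2 := by
      rw [hb2, abs_div, abs_pow, sq_abs]
    have hb1abs : |β1| = |e1| / h^2 := by
      rw [hb1, abs_div, abs_pow, sq_abs]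
    have hM0 : 0 ≤ M := le_trans (abs_nonneg _) hm1
    constructor
    · rw [hderiv]
      have : s + β2*(2*(x-a1)*(x-a2)+(x-a1)^2) + β1*((x-a2)^2+2*(x-a1)*(x-a2)) - s
          = β2*(u^2 + 2*u*v) + β1*(v^2 + 2*u*v) := by
        rw [hu, hv]; ring
      rw [this]
      calc |β2*(u^2 + 2*u*v) + β1*(v^2 + 2*u*v)|
          ≤ |β2*(u^2 + 2*u*v)| + |β1*(v^2 + 2*u*v)| := abs_add_le _ _
        _ ≤ |e2|/h^2 * h^2 + |e1|/h^2 * h^2 := by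
            rw [abs_mul, abs_mul, hb2abs, hb1abs]
            gcongr
        _ = |e2| + |e1| := by field_simp
        _ ≤ 3 * M := by nlinarith
    · rw [heval]
      have : b1 + s*(x-a1) + β2*(x-a1)^2*(x-a2) + β1*(x-a1)*(x-a2)^2 - (b1 + s * (x - a1))
          = β2*(u^2*v) + β1*(u*v^2) := by
        rw [hu, hv]; ring
      rw [this]
      calc |β2*(u^2*v) + β1*(u*v^2)|
          ≤ |β2*(u^2*v)| + |β1*(u*v^2)| := abs_add_le _ _
        _ ≤ |e2|/h^2 * (h^2*h) + |e1|/h^2 * (h^2*h) := by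
            have h1 : |β2*(u^2*v)| ≤ |e2|/h^2 * (h^2*h) := by
              rw [abs_mul, hb2abs]; gcongr
            have h2 : |β1*(u*v^2)| ≤ |e1|/h^2 * (h^2*h) := by
              rw [abs_mul, hb1abs]; gcongr
            exact add_le_add h1 h2
        _ = (|e2| + |e1|) * h := by field_simp
        _ ≤ 2 * M * h := by nlinarith
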